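/- Let n ≥ 2 and 1 ≤ p ≤ n. The set P_p of real symmetric n×n matrices A whose eigenvalue vector λ(A) lies in 𝒫_p is an open convex cone in the space of real symmetric n×n matrices, and the function A ↦ F(λ(A)) = (∏_{1 ≤ i1 < ⋯ < ip ≤ n} (λ_{i1}(A) + ⋯ + λ_{ip}(A)))^{1/C(n,p)} is concave on P_p. -/

import Mathlib

open Finset

/-- The cone `𝒫_p ⊆ ℝ^n`: every sum of `p` pairwise distinct components is positive. -/
def Pcone (n p : ℕ) : Set (Fin n → ℝ) :=
  {lam | ∀ S : Finset (Fin n), S.card = p → 0 < ∑ i ∈ S, lam i}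

/-- `M_p^n(λ) = ∏_{|S| = p} ∑_{i ∈ S} λ_i`. -/
def Mpn (n p : ℕ) (lam : Fin n → ℝ) : ℝ :=
  ∏ S ∈ Finset.univ.powersetCard p, ∑ i ∈ S, lam i

/-- `F(λ) = (M_p^n(λ))^{1/C(n,p)}`. -/
noncomputable def Fpn (n p : ℕ) (lam : Fin n → ℝ) : ℝ :=
  Mpn n p lam ^ ((n.choose p : ℝ)⁻¹)

/-- `F_i(λ) = ∂F/∂λ_i (λ)`. -/
noncomputable def Fi (n p : ℕ) (lam : Fin n → ℝ) (i : Fin n) : ℝ :=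
  fderiv ℝ (Fpn n p) lam (Pi.single i 1)

/-- The cone of real symmetric matrices whose eigenvalue vector lies in `𝒫_p`. -/
def PconeMat (n p : ℕ) : Set (Matrix (Fin n) (Fin n) ℝ) :=
  {A | ∃ hA : A.IsHermitian, hA.eigenvalues ∈ Pcone n p}

/-- `A ↦ F(λ(A))`, extended by `0` off the symmetric matrices. -/
noncomputable def FpnMat (n p : ℕ) (A : Matrix (Fin n) (Fin n) ℝ) : ℝ :=
  if hA : A.IsHermitian then
    (∏ S ∈ Finset.univ.powersetCard p, ∑ i ∈ S, hA.eigenvalues i) ^ ((n.choose p : ℝ)⁻¹)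
  else 0

open Matrix

namespace PconeAux

variable {n p : ℕ}

/-- Index type: `p`-element subsets of `Fin n`. -/
abbrev SIdx (n p : ℕ) := {S : Finset (Fin n) // S.card = p}

/-- The increasing enumeration of a `p`-element subset. -/
noncomputable def sEmb (S : SIdx n p) : Fin p → Fin n := fun i => ((S.1.orderIsoOfFin S.2) i : Fin n)

lemma sEmb_injective (S : SIdx n p) : Function.Injective (sEmb S) := fun i j h =>
  (S.1.orderIsoOfFin S.2).injective (Subtype.ext h)

lemma sEmb_mem (S : SIdx n p) (i : Fin p) : sEmb S i ∈ S.1 := ((S.1.orderIsoOfFin S.2) i).2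

lemma image_sEmb (S : SIdx n p) : Finset.univ.image (sEmb S) = S.1 := by
  apply Finset.eq_of_subset_of_card_le
  · intro x hx
    obtain ⟨i, _, rfl⟩ := Finset.mem_image.mp hx
    exact sEmb_mem S i
  · rw [Finset.card_image_of_injective _ (sEmb_injective S), Finset.card_univ, Fintype.card_fin,
      S.2]

lemma sum_sEmb {M : Type*} [AddCommMonoid M] (S : SIdx n p) (f : Fin n → M) :
    ∑ i : Fin p, f (sEmb S i) = ∑ j ∈ S.1, f j := by
  rw [← image_sEmb S, Finset.sum_image (fun i _ j _ h => sEmb_injective S h)]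

variable {R : Type*} [CommRing R]

theorem det_mul_expand (X : Matrix (Fin p) (Fin n) R) (Y : Matrix (Fin n) (Fin p) R) :
    det (X * Y) = ∑ f : Fin p → Fin n, (∏ i, Y (f i) i) * det (X.submatrix id f) := by
  have h1 : det (X * Y)
      = ∑ f ∈ Fintype.piFinset fun _ : Fin p => (univ : Finset (Fin n)),
          ∑ σ : Equiv.Perm (Fin p),
            ((Equiv.Perm.sign σ : ℤ) : R) * ∏ i, X (σ i) (f i) * Y (f i) i := by
    simp only [det_apply', mul_apply, prod_univ_sum, mul_sum]
    rw [Finset.sum_comm]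
  rw [h1, Fintype.piFinset_univ]
  refine Finset.sum_congr rfl fun f _ => ?_
  rw [det_apply', Finset.mul_sum]
  refine Finset.sum_congr rfl fun σ _ => ?_
  simp only [submatrix_apply, id_eq]
  rw [Finset.prod_mul_distrib]
  ring

theorem sum_fn_injective (hpn : p ≤ n) {M : Type*} [AddCommMonoid M]
    (g : (Fin p → Fin n) → M) (hg : ∀ f, ¬ Function.Injective f → g f = 0) :
    ∑ f : Fin p → Fin n, g f = ∑ S : SIdx n p, ∑ σ : Equiv.Perm (Fin p), g (sEmb S ∘ σ) := by
  classical
  obtain ⟨T₀, -, hT₀⟩ := Finset.exists_subset_card_eq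
    (show p ≤ (univ : Finset (Fin n)).card by simpa using hpn)
  set d : SIdx n p := ⟨T₀, hT₀⟩ with hd
  set φ : (Fin p → Fin n) → SIdx n p := fun f =>
    if h : Function.Injective f then
      ⟨univ.image f, by
        rw [Finset.card_image_of_injective _ h, Finset.card_univ, Fintype.card_fin]⟩
    else d with hφ
  have h1 : ∑ f : Fin p → Fin n, g f
      = ∑ f ∈ univ.filter (fun f : Fin p → Fin n => Function.Injective f), g f := by
    refine (Finset.sum_subset (filter_subset _ _) fun f _ hf => ?_).symm
    exact hg f (by simpa using hf)
  rw [h1, ← Finset.sum_fiberwise_of_maps_to (t := (univ : Finset (SIdx n p))) (g := φ)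
    (fun f _ => Finset.mem_univ (φ f)) g]
  refine Finset.sum_congr rfl fun S _ => ?_
  refine (Finset.sum_bij (fun (σ : Equiv.Perm (Fin p)) _ => sEmb S ∘ σ) ?_ ?_ ?_ ?_).symm
  · intro σ _
    rw [Finset.mem_filter, Finset.mem_filter]
    have hinj : Function.Injective (sEmb S ∘ σ) := (sEmb_injective S).comp σ.injective
    refine ⟨⟨Finset.mem_univ _, hinj⟩, ?_⟩
    rw [hφ]
    simp only [dif_pos hinj]
    apply Subtype.ext
    show univ.image (sEmb S ∘ σ) = S.1
    rw [← Finset.image_image]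
    rw [Finset.image_univ_equiv]
    exact image_sEmb S
  · intro σ _ τ _ h
    exact Equiv.ext fun i => sEmb_injective S (congrFun h i)
  · intro f hf
    rw [Finset.mem_filter] at hf
    obtain ⟨hf1, hf2⟩ := hf
    rw [Finset.mem_filter] at hf1
    have hinj : Function.Injective f := hf1.2
    have himg : univ.image f = S.1 := by
      rw [hφ] at hf2
      simp only [dif_pos hinj] at hf2
      exact congrArg Subtype.val hf2
    have hmem : ∀ i, f i ∈ S.1 := fun i => himg ▸ Finset.mem_image_of_mem f (Finset.mem_univ i)
    set u : Fin p → Fin p := fun i => (S.1.orderIsoOfFin S.2).symm ⟨f i, hmem i⟩ with hu'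
    have hu : Function.Injective u := by
      intro i j h
      apply hinj
      have := congrArg (fun x => ((S.1.orderIsoOfFin S.2) x : Fin n)) h
      simpa [hu', OrderIso.apply_symm_apply] using this
    refine ⟨Equiv.ofBijective u (Finite.injective_iff_bijective.mp hu), Finset.mem_univ _, ?_⟩
    funext i
    show sEmb S (u i) = f i
    simp [sEmb, hu', OrderIso.apply_symm_apply]
  · intro σ _
    rfl

theorem cauchyBinet (hpn : p ≤ n) (X : Matrix (Fin p) (Fin n) R) (Y : Matrix (Fin n) (Fin p) R) :
    det (X * Y) = ∑ S : SIdx n p, det (X.submatrix id (sEmb S)) * det (Y.submatrix (sEmb S) id) := by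
  rw [det_mul_expand]
  rw [sum_fn_injective hpn _ (fun f hf => ?_)]
  · refine Finset.sum_congr rfl fun S _ => ?_
    have hdet : ∀ σ : Equiv.Perm (Fin p),
        det (X.submatrix id (sEmb S ∘ σ))
          = ((Equiv.Perm.sign σ : ℤ) : R) * det (X.submatrix id (sEmb S)) := by
      intro σ
      have h2 : X.submatrix id (sEmb S ∘ σ) = (X.submatrix id (sEmb S)).submatrix id σ := by
        rw [Matrix.submatrix_submatrix]
        rfl
      rw [h2, Matrix.det_permute']
    have h3 : ∑ σ : Equiv.Perm (Fin p),
        (∏ i, Y ((sEmb S ∘ σ) i) i) * det (X.submatrix id (sEmb S ∘ σ))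
        = (∑ σ : Equiv.Perm (Fin p), ((Equiv.Perm.sign σ : ℤ) : R)
            * ∏ i, (Y.submatrix (sEmb S) id) (σ i) i) * det (X.submatrix id (sEmb S)) := by
      rw [Finset.sum_mul]
      refine Finset.sum_congr rfl fun σ _ => ?_
      rw [hdet σ]
      simp only [submatrix_apply, id_eq, Function.comp_apply]
      ring
    rw [h3, ← det_apply', mul_comm]
  · obtain ⟨i, j, hij, hne⟩ : ∃ i j, f i = f j ∧ i ≠ j := by
      simp only [Function.Injective, not_forall] at hf
      obtain ⟨i, j, h1, h2⟩ := hf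
      exact ⟨i, j, h1, h2⟩
    have hz : det (X.submatrix id f) = 0 := by
      rw [← Matrix.det_transpose]
      apply Matrix.det_zero_of_row_eq hne
      funext k
      simp [hij]
    rw [hz, mul_zero]

section Cp
variable {R : Type*} [CommRing R]

/-- The `p`-th multiplicative compound matrix. -/
noncomputable def Cp (p : ℕ) (M : Matrix (Fin n) (Fin n) R) : Matrix (SIdx n p) (SIdx n p) R :=
  fun S T => det (M.submatrix (sEmb S) (sEmb T))

theorem Cp_mul (hpn : p ≤ n) (M N : Matrix (Fin n) (Fin n) R) :
    Cp p (M * N) = Cp p M * Cp p N := by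
  ext S T
  have h1 : (M * N).submatrix (sEmb S) (sEmb T)
      = (M.submatrix (sEmb S) id) * (N.submatrix id (sEmb T)) :=
    Matrix.submatrix_mul M N (sEmb S) id (sEmb T) Function.bijective_id
  rw [Cp, h1, cauchyBinet hpn, Matrix.mul_apply]
  refine Finset.sum_congr rfl fun S' _ => ?_
  rw [Matrix.submatrix_submatrix, Matrix.submatrix_submatrix]
  simp [Cp, Function.comp_def]

lemma exists_sEmb_not_mem {S T : SIdx n p} (h : S ≠ T) : ∃ k : Fin p, sEmb S k ∉ T.1 := by
  by_contra hc
  push_neg at hc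
  apply h
  apply Subtype.ext
  apply Finset.eq_of_subset_of_card_le
  · intro a ha
    obtain ⟨k, -, rfl⟩ := Finset.mem_image.mp ((image_sEmb S).symm ▸ ha)
    exact hc k
  · rw [S.2, T.2]

theorem Cp_one (hpn : p ≤ n) : Cp p (1 : Matrix (Fin n) (Fin n) R) = 1 := by
  ext S T
  by_cases h : S = T
  · subst h
    rw [Cp, Matrix.submatrix_one _ (sEmb_injective S), Matrix.det_one, Matrix.one_apply_eq]
  · rw [Cp, Matrix.one_apply_ne h]
    obtain ⟨k, hk⟩ := exists_sEmb_not_mem h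
    apply Matrix.det_eq_zero_of_row_eq_zero k
    intro j
    simp only [submatrix_apply]
    exact Matrix.one_apply_ne (fun hEq => hk (hEq ▸ sEmb_mem T j))

theorem Cp_transpose (M : Matrix (Fin n) (Fin n) R) : Cp p Mᵀ = (Cp p M)ᵀ := by
  ext S T
  rw [Cp, Matrix.transpose_apply, Cp, ← Matrix.transpose_submatrix, Matrix.det_transpose]

theorem Cp_map {R' : Type*} [CommRing R'] (f : R →+* R') (M : Matrix (Fin n) (Fin n) R) :
    Cp p (M.map f) = (Cp p M).map f := by
  ext S T
  rw [Cp, Matrix.submatrix_map, Matrix.map_apply, Cp, ← RingHom.mapMatrix_apply,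
    ← RingHom.map_det]

end Cp

section Dual

local notation "K" => DualNumber ℝ
local notation "ι" => algebraMap ℝ (DualNumber ℝ)

/-- determinant over the dual numbers of a first-order perturbation -/
theorem det_dual {q : ℕ} (Y B : Matrix (Fin q) (Fin q) ℝ) :
    det (Y.map ι + (DualNumber.eps : K) • B.map ι)
      = ι (det Y) + (DualNumber.eps : K) • ι (∑ i, det (Y.updateRow i (B i))) := by
  classical
  set f := (Matrix.detRowAlternating : ((Fin q → K) [⋀^Fin q]→ₗ[K] K)).toMultilinearMap with hf
  set m : Fin q → (Fin q → K) := fun i => (DualNumber.eps : K) • (B.map ι) i with hm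
  set m' : Fin q → (Fin q → K) := fun i => (Y.map ι) i with hm'
  have h0 : det (Y.map ι + (DualNumber.eps : K) • B.map ι) = f (m + m') := by
    apply congrArg
    funext i j
    simp [hm, hm', add_comm]
  rw [h0, f.map_add_univ m m']
  have hterm : ∀ s : Finset (Fin q),
      f (s.piecewise m m') = (DualNumber.eps : K) ^ s.card •
        f (s.piecewise (fun i => (B.map ι) i) m') := by
    intro s
    set m₀ := s.piecewise (fun i => (B.map ι) i) m' with hm₀
    have h1 : s.piecewise m m' = s.piecewise (fun i => (DualNumber.eps : K) • m₀ i) m₀ := by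
      funext i
      by_cases hi : i ∈ s <;> simp [hm, hm₀, hi]
    rw [h1, f.map_piecewise_smul, Finset.prod_const]
  calc ∑ s : Finset (Fin q), f (s.piecewise m m')
      = ∑ s ∈ insert (∅ : Finset (Fin q))
          (Finset.univ.image fun i : Fin q => ({i} : Finset (Fin q))), f (s.piecewise m m') := by
        refine (Finset.sum_subset (Finset.subset_univ _) fun s _ hs => ?_).symm
        simp only [Finset.mem_insert, Finset.mem_image, Finset.mem_univ, true_and, not_or,
          not_exists] at hs
        obtain ⟨h1, h2⟩ := hs
        have hcard : 2 ≤ s.card := by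
          by_contra hlt
          push_neg at hlt
          have h3 : s.card = 0 ∨ s.card = 1 := by omega
          rcases h3 with hc | hc
          · exact h1 (Finset.card_eq_zero.mp hc)
          · obtain ⟨a, rfl⟩ := Finset.card_eq_one.mp hc
            exact h2 a rfl
        rw [hterm s]
        obtain ⟨k, hk⟩ : ∃ k, s.card = k + 2 := ⟨s.card - 2, by omega⟩
        rw [hk, pow_add, pow_two, DualNumber.eps_mul_eps, mul_zero, zero_smul]
    _ = f (Finset.piecewise ∅ m m') + ∑ i : Fin q, f (Finset.piecewise {i} m m') := by
        rw [Finset.sum_insert (by simp), Finset.sum_image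
          (fun i _ j _ h => Finset.singleton_injective h)]
    _ = ι (det Y) + (DualNumber.eps : K) • ι (∑ i, det (Y.updateRow i (B i))) := by
        congr 1
        · rw [Finset.piecewise_empty]
          show det (Y.map ι) = ι (det Y)
          rw [← RingHom.mapMatrix_apply, ← RingHom.map_det]
        · rw [map_sum, Finset.smul_sum]
          refine Finset.sum_congr rfl fun i _ => ?_
          rw [Finset.piecewise_singleton, hm]
          rw [f.map_update_smul m' i (DualNumber.eps : K) ((B.map ι) i)]
          congr 1
          have h3 : (Y.map ι).updateRow i ((B.map ι) i) = (Y.updateRow i (B i)).map ι := by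
            refine Matrix.ext fun a b => ?_
            rcases eq_or_ne a i with rfl | hne
            · simp [Matrix.updateRow_apply]
            · simp [Matrix.updateRow_apply, hne]
          show det ((Y.map ι).updateRow i ((B.map ι) i)) = ι (det (Y.updateRow i (B i)))
          rw [h3, ← RingHom.mapMatrix_apply, ← RingHom.map_det]


/-- First-order dual-number perturbation of the identity in direction `A`. -/
noncomputable def dualMat (A : Matrix (Fin n) (Fin n) ℝ) : Matrix (Fin n) (Fin n) K :=
  (1 : Matrix (Fin n) (Fin n) ℝ).map ι + (DualNumber.eps : K) • A.map ι

/-- The `p`-th additive compound matrix of `A`. -/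
noncomputable def Dp (p : ℕ) (A : Matrix (Fin n) (Fin n) ℝ) : Matrix (SIdx n p) (SIdx n p) ℝ :=
  fun S T => ∑ i : Fin p,
    det ((((1 : Matrix (Fin n) (Fin n) ℝ)).submatrix (sEmb S) (sEmb T)).updateRow i
      (A.submatrix (sEmb S) (sEmb T) i))

theorem Cp_dualMat (A : Matrix (Fin n) (Fin n) ℝ) :
    Cp p (dualMat A) = (Cp p (1 : Matrix (Fin n) (Fin n) ℝ)).map ι
      + (DualNumber.eps : K) • (Dp p A).map ι := by
  refine Matrix.ext fun S T => ?_
  have hsub : (dualMat A).submatrix (sEmb S) (sEmb T)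
      = ((1 : Matrix (Fin n) (Fin n) ℝ).submatrix (sEmb S) (sEmb T)).map ι
        + (DualNumber.eps : K) • (A.submatrix (sEmb S) (sEmb T)).map ι := by
    refine Matrix.ext fun i j => ?_
    simp [dualMat, Matrix.one_apply, apply_ite]
  rw [Cp, hsub, det_dual]
  simp [Dp, Cp, Matrix.map_apply]

theorem dual_cancel {α : Type*} [Fintype α] [DecidableEq α] {M₁ N₁ M₂ N₂ : Matrix α α ℝ}
    (h : M₁.map ι + (DualNumber.eps : K) • N₁.map ι
      = M₂.map ι + (DualNumber.eps : K) • N₂.map ι) : N₁ = N₂ := by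
  refine Matrix.ext fun a b => ?_
  have haux : ∀ u v : ℝ, TrivSqZeroExt.snd (ι u + (DualNumber.eps : K) * ι v) = v := by
    intro u v
    simp [TrivSqZeroExt.algebraMap_eq_inl]
  have h3 := congrArg (fun X : Matrix α α K => TrivSqZeroExt.snd (X a b)) h
  simp only [Matrix.add_apply, Matrix.smul_apply, Matrix.map_apply, smul_eq_mul] at h3
  rw [haux, haux] at h3
  exact h3

theorem Dp_conj (hpn : p ≤ n) (V A : Matrix (Fin n) (Fin n) ℝ) (hV : V * Vᵀ = 1) :
    Dp p (V * A * Vᵀ) = Cp p V * Dp p A * (Cp p V)ᵀ := by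
  have h1 : V * (1 : Matrix (Fin n) (Fin n) ℝ) * Vᵀ = 1 := by rw [mul_one, hV]
  have key : dualMat (V * A * Vᵀ) = (V.map ι) * dualMat A * (Vᵀ.map ι) := by
    rw [dualMat, dualMat, Matrix.mul_add, Matrix.add_mul, Matrix.mul_smul, Matrix.smul_mul,
      ← Matrix.map_mul, ← Matrix.map_mul, ← Matrix.map_mul, ← Matrix.map_mul, h1]
  have h2 := congrArg (Cp p) key
  rw [Cp_dualMat, Cp_mul hpn, Cp_mul hpn, Cp_dualMat, Cp_map, Cp_map, Cp_transpose,
    Matrix.mul_add, Matrix.add_mul, Matrix.mul_smul, Matrix.smul_mul,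
    ← Matrix.map_mul, ← Matrix.map_mul, ← Matrix.map_mul, ← Matrix.map_mul] at h2
  exact dual_cancel h2

theorem Dp_add (A B : Matrix (Fin n) (Fin n) ℝ) : Dp p (A + B) = Dp p A + Dp p B := by
  refine Matrix.ext fun S T => ?_
  rw [Matrix.add_apply]
  simp only [Dp]
  rw [← Finset.sum_add_distrib]
  refine Finset.sum_congr rfl fun i _ => ?_
  have h : ((A + B).submatrix (sEmb S) (sEmb T)) i
      = (A.submatrix (sEmb S) (sEmb T)) i + (B.submatrix (sEmb S) (sEmb T)) i := rfl
  rw [h, Matrix.det_updateRow_add]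

theorem Dp_smul (c : ℝ) (A : Matrix (Fin n) (Fin n) ℝ) : Dp p (c • A) = c • Dp p A := by
  refine Matrix.ext fun S T => ?_
  rw [Matrix.smul_apply]
  simp only [Dp]
  rw [smul_eq_mul, Finset.mul_sum]
  refine Finset.sum_congr rfl fun i _ => ?_
  have h : ((c • A).submatrix (sEmb S) (sEmb T)) i
      = c • ((A.submatrix (sEmb S) (sEmb T)) i) := rfl
  rw [h, Matrix.det_updateRow_smul]

theorem Dp_diagonal (d : Fin n → ℝ) :
    Dp p (diagonal d) = diagonal (fun S : SIdx n p => ∑ j ∈ S.1, d j) := by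
  refine Matrix.ext fun S T => ?_
  rcases eq_or_ne S T with rfl | hne
  · rw [Matrix.diagonal_apply_eq]
    simp only [Dp]
    rw [Matrix.submatrix_one _ (sEmb_injective S)]
    rw [← sum_sEmb S d]
    refine Finset.sum_congr rfl fun i _ => ?_
    have hrow : ((diagonal d).submatrix (sEmb S) (sEmb S)) i
        = d (sEmb S i) • (1 : Matrix (Fin p) (Fin p) ℝ) i := by
      funext j
      rw [Matrix.submatrix_apply]
      rcases eq_or_ne i j with rfl | hij
      · rw [Matrix.diagonal_apply_eq, Pi.smul_apply, Matrix.one_apply_eq, smul_eq_mul, mul_one]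
      · rw [Matrix.diagonal_apply_ne _ (fun hc => hij (sEmb_injective S hc)), Pi.smul_apply,
          Matrix.one_apply_ne hij, smul_eq_mul, mul_zero]
    rw [hrow, Matrix.det_updateRow_smul, Matrix.updateRow_eq_self, Matrix.det_one, mul_one]
  · rw [Matrix.diagonal_apply_ne _ hne]
    simp only [Dp]
    apply Finset.sum_eq_zero
    intro i _
    obtain ⟨k, hk⟩ := exists_sEmb_not_mem hne
    apply Matrix.det_eq_zero_of_row_eq_zero k
    intro j
    rcases eq_or_ne k i with rfl | hik
    · rw [Matrix.updateRow_self, Matrix.submatrix_apply]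
      exact Matrix.diagonal_apply_ne _ (fun hc => hk (hc ▸ sEmb_mem T j))
    · rw [Matrix.updateRow_ne hik]
      simp only [submatrix_apply]
      exact Matrix.one_apply_ne (fun hc => hk (hc ▸ sEmb_mem T j))

end Dual


section Spectral

theorem posDef_conj {m' : Type*} [Fintype m'] [DecidableEq m'] {M P P' : Matrix m' m' ℝ}
    (hM : M.PosDef) (h1 : P * P' = 1) : (P * M * Pᵀ).PosDef := by
  have hMt : Mᵀ = M := by
    rw [← Matrix.conjTranspose_eq_transpose_of_trivial, hM.1]
  refine Matrix.PosDef.of_dotProduct_mulVec_pos ?_ ?_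
  · show (P * M * Pᵀ)ᴴ = P * M * Pᵀ
    rw [Matrix.conjTranspose_eq_transpose_of_trivial, Matrix.transpose_mul, Matrix.transpose_mul,
      Matrix.transpose_transpose, hMt, ← mul_assoc]
  · intro x hx
    have hPx : Pᵀ *ᵥ x ≠ 0 := by
      intro hc
      apply hx
      have h2 : P'ᵀ * Pᵀ = 1 := by rw [← Matrix.transpose_mul, h1, Matrix.transpose_one]
      calc x = (P'ᵀ * Pᵀ) *ᵥ x := by rw [h2, Matrix.one_mulVec]
        _ = P'ᵀ *ᵥ (Pᵀ *ᵥ x) := by rw [Matrix.mulVec_mulVec]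
        _ = 0 := by rw [hc, Matrix.mulVec_zero]
    have hsv : ∀ v : m' → ℝ, star v = v := fun v => funext fun i => rfl
    have key : star x ⬝ᵥ (P * M * Pᵀ) *ᵥ x = star (Pᵀ *ᵥ x) ⬝ᵥ M *ᵥ (Pᵀ *ᵥ x) := by
      rw [hsv, hsv, ← Matrix.mulVec_mulVec, ← Matrix.mulVec_mulVec, Matrix.dotProduct_mulVec,
        ← Matrix.mulVec_transpose]
    rw [key]
    exact hM.dotProduct_mulVec_pos hPx

variable {n p : ℕ}

theorem Dp_decomp (hpn : p ≤ n) {A : Matrix (Fin n) (Fin n) ℝ} (hA : A.IsHermitian) :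
    ∃ Q : Matrix (SIdx n p) (SIdx n p) ℝ, Q * Qᵀ = 1 ∧ Qᵀ * Q = 1 ∧
      Dp p A = Q * diagonal (fun S : SIdx n p => ∑ j ∈ S.1, hA.eigenvalues j) * Qᵀ := by
  set V : Matrix (Fin n) (Fin n) ℝ := (hA.eigenvectorUnitary : Matrix (Fin n) (Fin n) ℝ) with hV
  have hVs : star V = Vᵀ := by
    rw [Matrix.star_eq_conjTranspose, Matrix.conjTranspose_eq_transpose_of_trivial]
  have hV1 : V * Vᵀ = 1 := by
    rw [← hVs]; exact (Matrix.mem_unitaryGroup_iff).mp hA.eigenvectorUnitary.2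
  have hV2 : Vᵀ * V = 1 := by
    rw [← hVs]; exact (Matrix.mem_unitaryGroup_iff').mp hA.eigenvectorUnitary.2
  have hspec : A = V * diagonal hA.eigenvalues * Vᵀ := by
    have h := hA.spectral_theorem
    rw [RCLike.ofReal_real_eq_id] at h
    rw [← hVs]
    simpa [hV, Function.id_comp] using h
  refine ⟨Cp p V, ?_, ?_, ?_⟩
  · rw [← Cp_transpose, ← Cp_mul hpn, hV1, Cp_one hpn]
  · rw [← Cp_transpose, ← Cp_mul hpn, hV2, Cp_one hpn]
  · conv_lhs => rw [hspec]
    rw [Dp_conj hpn V _ hV1, Dp_diagonal]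

theorem det_Dp (hpn : p ≤ n) {A : Matrix (Fin n) (Fin n) ℝ} (hA : A.IsHermitian) :
    det (Dp p A) = ∏ S : SIdx n p, ∑ j ∈ S.1, hA.eigenvalues j := by
  obtain ⟨Q, hQ1, -, hD⟩ := Dp_decomp hpn hA
  have h1 : det Q * det Qᵀ = 1 := by rw [← Matrix.det_mul, hQ1, Matrix.det_one]
  rw [hD, Matrix.det_mul, Matrix.det_mul]
  calc det Q * det (diagonal fun S : SIdx n p => ∑ j ∈ S.1, hA.eigenvalues j) * det Qᵀ
      = (det Q * det Qᵀ) * det (diagonal fun S : SIdx n p => ∑ j ∈ S.1, hA.eigenvalues j) := by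
        ring
    _ = ∏ S : SIdx n p, ∑ j ∈ S.1, hA.eigenvalues j := by
        rw [h1, one_mul, Matrix.det_diagonal]

theorem posDef_Dp_iff (hpn : p ≤ n) {A : Matrix (Fin n) (Fin n) ℝ} (hA : A.IsHermitian) :
    (Dp p A).PosDef ↔ ∀ S : SIdx n p, 0 < ∑ j ∈ S.1, hA.eigenvalues j := by
  obtain ⟨Q, hQ1, hQ2, hD⟩ := Dp_decomp hpn hA
  set f : SIdx n p → ℝ := fun S => ∑ j ∈ S.1, hA.eigenvalues j with hf
  constructor
  · intro h
    have h3 := posDef_conj (P := Qᵀ) (P' := Q) (hD ▸ h) hQ2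
    have h4 : Qᵀ * (Q * diagonal f * Qᵀ) * (Qᵀ)ᵀ = diagonal f := by
      rw [Matrix.transpose_transpose]
      simp only [mul_assoc]
      rw [hQ2, Matrix.mul_one, ← mul_assoc, hQ2, Matrix.one_mul]
    rw [h4] at h3
    exact fun S => (Matrix.posDef_diagonal_iff.mp h3) S
  · intro h
    rw [hD]
    exact posDef_conj (Matrix.posDef_diagonal_iff.mpr h) hQ1

end Spectral


section Minkowski

variable {m' : Type*} [Fintype m'] [DecidableEq m']

theorem real_spectral {M : Matrix m' m' ℝ} (hM : M.IsHermitian) :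
    ∃ V : Matrix m' m' ℝ, V * Vᵀ = 1 ∧ Vᵀ * V = 1 ∧
      M = V * diagonal hM.eigenvalues * Vᵀ := by
  set V : Matrix m' m' ℝ := (hM.eigenvectorUnitary : Matrix m' m' ℝ) with hV
  have hVs : star V = Vᵀ := by
    rw [Matrix.star_eq_conjTranspose, Matrix.conjTranspose_eq_transpose_of_trivial]
  have hV1 : V * Vᵀ = 1 := by
    rw [← hVs]; exact (Matrix.mem_unitaryGroup_iff).mp hM.eigenvectorUnitary.2
  have hV2 : Vᵀ * V = 1 := by
    rw [← hVs]; exact (Matrix.mem_unitaryGroup_iff').mp hM.eigenvectorUnitary.2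
  refine ⟨V, hV1, hV2, ?_⟩
  have h := hM.spectral_theorem
  rw [RCLike.ofReal_real_eq_id] at h
  rw [← hVs]
  simpa [hV, Function.id_comp] using h

theorem det_one_add_of_posDef {Z : Matrix m' m' ℝ} (hZ : Z.PosDef) :
    det (1 + Z) = ∏ i, (1 + hZ.1.eigenvalues i) := by
  obtain ⟨V, hV1, hV2, hspec⟩ := real_spectral hZ.1
  have h1 : (1 : Matrix m' m' ℝ) + Z = V * diagonal (fun i => 1 + hZ.1.eigenvalues i) * Vᵀ := by
    have hd : diagonal (fun i => 1 + hZ.1.eigenvalues i)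
        = 1 + diagonal hZ.1.eigenvalues := by
      rw [← Matrix.diagonal_one, Matrix.diagonal_add]
    rw [hd, Matrix.mul_add, Matrix.add_mul, mul_one, hV1, ← hspec]
  have h2 : det V * det Vᵀ = 1 := by rw [← Matrix.det_mul, hV1, Matrix.det_one]
  rw [h1, Matrix.det_mul, Matrix.det_mul]
  calc det V * det (diagonal fun i => 1 + hZ.1.eigenvalues i) * det Vᵀ
      = (det V * det Vᵀ) * det (diagonal fun i => 1 + hZ.1.eigenvalues i) := by ring
    _ = _ := by rw [h2, one_mul, Matrix.det_diagonal]

theorem det_of_posDef_eigen {Z : Matrix m' m' ℝ} (hZ : Z.PosDef) :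
    det Z = ∏ i, hZ.1.eigenvalues i := by
  have h := hZ.1.det_eq_prod_eigenvalues
  simpa using h

theorem geom_superadd {N : ℕ} (hN : N = Fintype.card m') (hN1 : 0 < N) (μ : m' → ℝ)
    (hμ : ∀ i, 0 < μ i) :
    1 + (∏ i, μ i) ^ ((N : ℝ)⁻¹) ≤ (∏ i, (1 + μ i)) ^ ((N : ℝ)⁻¹) := by
  set α : ℝ := (N : ℝ)⁻¹ with hα
  have hα0 : 0 ≤ α := by positivity
  have h1p : ∀ i : m', 0 < 1 + μ i := fun i => by linarith [hμ i]
  have hw1 : ∑ _i : m', α = 1 := by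
    rw [Finset.sum_const, Finset.card_univ, ← hN, nsmul_eq_mul, hα,
      mul_inv_cancel₀ (by exact_mod_cast hN1.ne')]
  have hA1 := Real.geom_mean_le_arith_mean_weighted Finset.univ (fun _ => α)
    (fun i => 1 / (1 + μ i)) (fun i _ => hα0) hw1
    (fun i _ => div_nonneg zero_le_one (h1p i).le)
  have hA2 := Real.geom_mean_le_arith_mean_weighted Finset.univ (fun _ => α)
    (fun i => μ i / (1 + μ i)) (fun i _ => hα0) hw1
    (fun i _ => div_nonneg (hμ i).le (h1p i).le)
  have hsum : (∑ i : m', α * (1 / (1 + μ i))) + ∑ i : m', α * (μ i / (1 + μ i)) = 1 := by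
    rw [← Finset.sum_add_distrib]
    have hterm : ∀ i : m', α * (1 / (1 + μ i)) + α * (μ i / (1 + μ i)) = α := by
      intro i
      have hne := (h1p i).ne'
      field_simp
    rw [Finset.sum_congr rfl (fun i _ => hterm i)]
    exact hw1
  have hP : (∏ i : m', (1 / (1 + μ i)) ^ α) + (∏ i : m', (μ i / (1 + μ i)) ^ α) ≤ 1 := by
    calc (∏ i : m', (1 / (1 + μ i)) ^ α) + (∏ i : m', (μ i / (1 + μ i)) ^ α)
        ≤ (∑ i : m', α * (1 / (1 + μ i))) + ∑ i : m', α * (μ i / (1 + μ i)) :=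
          add_le_add hA1 hA2
      _ = 1 := hsum
  set G : ℝ := ∏ i : m', (1 + μ i) ^ α with hG
  have hG0 : 0 ≤ G := Finset.prod_nonneg fun i _ => Real.rpow_nonneg (h1p i).le α
  have hGP1 : G * (∏ i : m', (1 / (1 + μ i)) ^ α) = 1 := by
    rw [hG, ← Finset.prod_mul_distrib]
    have hterm : ∀ i : m', (1 + μ i) ^ α * (1 / (1 + μ i)) ^ α = 1 := by
      intro i
      rw [← Real.mul_rpow (h1p i).le (div_nonneg zero_le_one (h1p i).le), mul_one_div,
        div_self (h1p i).ne', Real.one_rpow]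
    rw [Finset.prod_congr rfl (fun i _ => hterm i), Finset.prod_const_one]
  have hGP2 : G * (∏ i : m', (μ i / (1 + μ i)) ^ α) = (∏ i, μ i) ^ α := by
    rw [hG, ← Finset.prod_mul_distrib]
    have hterm : ∀ i : m', (1 + μ i) ^ α * (μ i / (1 + μ i)) ^ α = μ i ^ α := by
      intro i
      rw [← Real.mul_rpow (h1p i).le (div_nonneg (hμ i).le (h1p i).le), mul_comm,
        div_mul_cancel₀ _ (h1p i).ne']
    rw [Finset.prod_congr rfl (fun i _ => hterm i),
      Real.finset_prod_rpow Finset.univ μ (fun i _ => (hμ i).le) α]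
  calc 1 + (∏ i, μ i) ^ α
      = G * ((∏ i : m', (1 / (1 + μ i)) ^ α) + ∏ i : m', (μ i / (1 + μ i)) ^ α) := by
        rw [mul_add, hGP1, hGP2]
    _ ≤ G * 1 := mul_le_mul_of_nonneg_left hP hG0
    _ = (∏ i, (1 + μ i)) ^ α := by
        rw [mul_one, hG, Real.finset_prod_rpow Finset.univ _ (fun i _ => (h1p i).le) α]

open scoped MatrixOrder in
theorem minkowski_det {X Y : Matrix m' m' ℝ} (hc : 0 < Fintype.card m')
    (hX : X.PosDef) (hY : Y.PosDef) :
    det X ^ ((Fintype.card m' : ℝ)⁻¹) + det Y ^ ((Fintype.card m' : ℝ)⁻¹)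
      ≤ det (X + Y) ^ ((Fintype.card m' : ℝ)⁻¹) := by
  classical
  set α : ℝ := (Fintype.card m' : ℝ)⁻¹ with hα
  have hdetX : 0 < det X := hX.det_pos
  set S := CFC.sqrt X with hSdef
  have hSS : S * S = X := CFC.sqrt_mul_sqrt_self X hX.posSemidef.nonneg
  have hSh : S.IsHermitian := (CFC.sqrt_nonneg X).posSemidef.1
  have hSt : Sᵀ = S := by rw [← Matrix.conjTranspose_eq_transpose_of_trivial, hSh]
  have hdetS : det S ≠ 0 := by
    intro h
    rw [← hSS, Matrix.det_mul, h, mul_zero] at hdetX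
    exact lt_irrefl _ hdetX
  have hSunit : IsUnit S.det := isUnit_iff_ne_zero.mpr hdetS
  have hS1 : S * S⁻¹ = 1 := Matrix.mul_nonsing_inv S hSunit
  have hS2 : S⁻¹ * S = 1 := Matrix.nonsing_inv_mul S hSunit
  have hSit : (S⁻¹)ᵀ = S⁻¹ := by rw [Matrix.transpose_nonsing_inv, hSt]
  obtain ⟨Z, hZdef⟩ : ∃ Z', Z' = S⁻¹ * Y * (S⁻¹)ᵀ := ⟨_, rfl⟩
  have hZ : Z.PosDef := by rw [hZdef]; exact posDef_conj hY hS2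
  have hdetSS : det X = det S * det S := by rw [← hSS, Matrix.det_mul]
  have hYZ : Y = S * Z * S := by
    rw [hZdef, hSit]
    calc Y = (S * S⁻¹) * Y * (S⁻¹ * S) := by rw [hS1, hS2, one_mul, mul_one]
      _ = S * (S⁻¹ * Y * S⁻¹) * S := by noncomm_ring
  have hXY : X + Y = S * (1 + Z) * S := by
    rw [Matrix.mul_add, Matrix.add_mul, mul_one, hSS, hYZ]
  have hdetXY : det (X + Y) = det X * det (1 + Z) := by
    rw [hXY, Matrix.det_mul, Matrix.det_mul, hdetSS]
    ring
  have hdetY : det Y = det X * det Z := by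
    rw [hYZ, Matrix.det_mul, Matrix.det_mul, hdetSS]
    ring
  set μ := hZ.1.eigenvalues with hμdef
  have hμpos : ∀ i, 0 < μ i := hZ.eigenvalues_pos
  have h1 : det (1 + Z) = ∏ i, (1 + μ i) := det_one_add_of_posDef hZ
  have h2 : det Z = ∏ i, μ i := det_of_posDef_eigen hZ
  have hkey : 1 + (det Z) ^ α ≤ (det (1 + Z)) ^ α := by
    rw [h1, h2]
    exact geom_superadd rfl hc μ hμpos
  calc det X ^ α + det Y ^ α
      = det X ^ α * (1 + det Z ^ α) := by
        rw [hdetY, Real.mul_rpow hdetX.le (hZ.det_pos).le]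
        ring
    _ ≤ det X ^ α * (det (1 + Z)) ^ α := by
        apply mul_le_mul_of_nonneg_left hkey (Real.rpow_nonneg hdetX.le α)
    _ = det (X + Y) ^ α := by
        rw [hdetXY, Real.mul_rpow hdetX.le]
        have : (0:ℝ) < det (1 + Z) := by
          rw [h1]
          exact Finset.prod_pos fun i _ => by linarith [hμpos i]
        exact this.le

end Minkowski


section OpenCone

variable {n p : ℕ}

theorem continuous_Dp_entry (S T : SIdx n p) :
    Continuous fun A : Matrix (Fin n) (Fin n) ℝ => Dp p A S T := by
  apply continuous_finset_sum
  intro i _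
  apply Continuous.matrix_det
  apply continuous_matrix
  intro a b
  rcases eq_or_ne a i with rfl | hai
  · simp only [Matrix.updateRow_apply, if_pos rfl, Matrix.submatrix_apply]
    exact (continuous_apply _).comp (continuous_apply _)
  · simp only [Matrix.updateRow_apply, if_neg hai]
    exact continuous_const

theorem continuous_quad {m' : Type*} [Fintype m'] (N : Matrix m' m' ℝ) :
    Continuous fun x : m' → ℝ => star x ⬝ᵥ N *ᵥ x := by
  have h : (fun x : m' → ℝ => star x ⬝ᵥ N *ᵥ x)
      = fun x => ∑ S, x S * ∑ T, N S T * x T := by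
    funext x
    simp [dotProduct, Matrix.mulVec, star_trivial]
  rw [h]
  exact continuous_finset_sum _ fun S _ => ((continuous_apply S).mul
    (continuous_finset_sum _ fun T _ => continuous_const.mul (continuous_apply T)))

theorem quad_abs_le {m' : Type*} [Fintype m'] (N : Matrix m' m' ℝ) (x : m' → ℝ)
    (hx : ‖x‖ ≤ 1) : |star x ⬝ᵥ N *ᵥ x| ≤ ∑ S, ∑ T, |N S T| := by
  have hxi : ∀ i, |x i| ≤ 1 := fun i => le_trans (by
    rw [← Real.norm_eq_abs]; exact norm_le_pi_norm x i) hx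
  have h : star x ⬝ᵥ N *ᵥ x = ∑ S, x S * ∑ T, N S T * x T := by
    simp [dotProduct, Matrix.mulVec, star_trivial]
  rw [h]
  calc |∑ S, x S * ∑ T, N S T * x T| ≤ ∑ S, |x S * ∑ T, N S T * x T| :=
        Finset.abs_sum_le_sum_abs _ _
    _ ≤ ∑ S, ∑ T, |N S T| := by
        refine Finset.sum_le_sum fun S _ => ?_
        rw [abs_mul]
        calc |x S| * |∑ T, N S T * x T| ≤ 1 * ∑ T, |N S T| := by
              apply mul_le_mul (hxi S) ?_ (abs_nonneg _) zero_le_one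
              calc |∑ T, N S T * x T| ≤ ∑ T, |N S T * x T| := Finset.abs_sum_le_sum_abs _ _
                _ ≤ ∑ T, |N S T| := by
                    refine Finset.sum_le_sum fun T _ => ?_
                    rw [abs_mul]
                    calc |N S T| * |x T| ≤ |N S T| * 1 :=
                          mul_le_mul_of_nonneg_left (hxi T) (abs_nonneg _)
                      _ = |N S T| := mul_one _
          _ = ∑ T, |N S T| := one_mul _

theorem quad_smul {m' : Type*} [Fintype m'] (N : Matrix m' m' ℝ) (c : ℝ) (x : m' → ℝ) :
    star (c • x) ⬝ᵥ N *ᵥ (c • x) = c ^ 2 * (star x ⬝ᵥ N *ᵥ x) := by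
  have h1 : star (c • x) = c • star x := by
    funext i
    simp [star_trivial]
  rw [h1, Matrix.mulVec_smul, smul_dotProduct, dotProduct_smul]
  simp [smul_eq_mul]
  ring

theorem isOpen_quad_set (hp1 : 1 ≤ p) (hpn : p ≤ n) :
    IsOpen {A : Matrix (Fin n) (Fin n) ℝ |
      ∀ x : SIdx n p → ℝ, x ≠ 0 → 0 < star x ⬝ᵥ (Dp p A) *ᵥ x} := by
  have hne : Nonempty (SIdx n p) := by
    obtain ⟨T₀, -, hT₀⟩ := Finset.exists_subset_card_eq
      (show p ≤ (Finset.univ : Finset (Fin n)).card by simpa using hpn)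
    exact ⟨⟨T₀, hT₀⟩⟩
  rw [isOpen_iff_forall_mem_open]
  intro A hA
  have hKc : IsCompact (Metric.sphere (0 : SIdx n p → ℝ) 1) := isCompact_sphere 0 1
  have hKne : (Metric.sphere (0 : SIdx n p → ℝ) 1).Nonempty :=
    NormedSpace.sphere_nonempty.mpr zero_le_one
  obtain ⟨x₀, hx₀K, hmin⟩ := hKc.exists_isMinOn hKne (continuous_quad (Dp p A)).continuousOn
  have hx₀ : x₀ ≠ 0 := by
    intro hc
    rw [mem_sphere_zero_iff_norm] at hx₀K
    rw [hc, norm_zero] at hx₀K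
    exact one_ne_zero hx₀K.symm
  set m := star x₀ ⬝ᵥ (Dp p A) *ᵥ x₀ with hm
  have hm0 : 0 < m := hA x₀ hx₀
  refine ⟨{B : Matrix (Fin n) (Fin n) ℝ |
    (∑ S : SIdx n p, ∑ T : SIdx n p, |Dp p B S T - Dp p A S T|) < m / 2}, ?_, ?_, ?_⟩
  · -- subset
    intro B hB
    simp only [Set.mem_setOf_eq] at hB ⊢
    intro x hx
    have hy1 : ‖(‖x‖⁻¹ • x : SIdx n p → ℝ)‖ = 1 := by
      rw [norm_smul, norm_inv, norm_norm, inv_mul_cancel₀ (norm_ne_zero_iff.mpr hx)]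
    set y : SIdx n p → ℝ := ‖x‖⁻¹ • x with hy
    have hxy : x = ‖x‖ • y := by
      rw [hy, smul_smul, mul_inv_cancel₀ (norm_ne_zero_iff.mpr hx), one_smul]
    have hyq : 0 < star y ⬝ᵥ (Dp p B) *ᵥ y := by
      have hmin' : m ≤ star y ⬝ᵥ (Dp p A) *ᵥ y := by
        have := hmin (by rw [Metric.mem_sphere, dist_zero_right, hy1] : y ∈ Metric.sphere (0 : SIdx n p → ℝ) 1)
        exact this
      have hdiff : |star y ⬝ᵥ (Dp p B - Dp p A) *ᵥ y|
          ≤ ∑ S : SIdx n p, ∑ T : SIdx n p, |(Dp p B - Dp p A) S T| :=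
        quad_abs_le _ y (le_of_eq hy1)
      have hmm : Dp p B = Dp p A + (Dp p B - Dp p A) := by abel
      have hsplit : star y ⬝ᵥ (Dp p B) *ᵥ y
          = star y ⬝ᵥ (Dp p A) *ᵥ y + star y ⬝ᵥ (Dp p B - Dp p A) *ᵥ y := by
        conv_lhs => rw [hmm]
        rw [Matrix.add_mulVec, dotProduct_add]
      rw [hsplit]
      have hent : (∑ S : SIdx n p, ∑ T : SIdx n p, |(Dp p B - Dp p A) S T|)
          = ∑ S : SIdx n p, ∑ T : SIdx n p, |Dp p B S T - Dp p A S T| := by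
        refine Finset.sum_congr rfl fun S _ => Finset.sum_congr rfl fun T _ => ?_
        rw [Matrix.sub_apply]
      have h4 : |star y ⬝ᵥ (Dp p B - Dp p A) *ᵥ y| < m / 2 :=
        lt_of_le_of_lt hdiff (by rw [hent]; exact hB)
      have h5 : -(m / 2) < star y ⬝ᵥ (Dp p B - Dp p A) *ᵥ y := (abs_lt.mp h4).1
      linarith
    rw [hxy, quad_smul]
    have hn0 : 0 < ‖x‖ := norm_pos_iff.mpr hx
    positivity
  · -- open
    have hcont : Continuous fun B : Matrix (Fin n) (Fin n) ℝ =>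
        ∑ S : SIdx n p, ∑ T : SIdx n p, |Dp p B S T - Dp p A S T| := by
      refine continuous_finset_sum _ fun S _ => continuous_finset_sum _ fun T _ => ?_
      exact (((continuous_Dp_entry S T).sub continuous_const).abs)
    exact isOpen_lt hcont continuous_const
  · simp only [Set.mem_setOf_eq, sub_self, abs_zero, Finset.sum_const_zero]
    linarith

theorem Dp_isHermitian (hpn : p ≤ n) {A : Matrix (Fin n) (Fin n) ℝ} (hA : A.IsHermitian) :
    (Dp p A).IsHermitian := by
  obtain ⟨Q, -, -, hD⟩ := Dp_decomp hpn hA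
  rw [hD]
  show (_ : Matrix (SIdx n p) (SIdx n p) ℝ)ᴴ = _
  rw [Matrix.conjTranspose_eq_transpose_of_trivial, Matrix.transpose_mul, Matrix.transpose_mul,
    Matrix.transpose_transpose, Matrix.diagonal_transpose, ← mul_assoc]

theorem posDef_smul_pos {m' : Type*} [Fintype m'] {M : Matrix m' m' ℝ} (hM : M.PosDef)
    {c : ℝ} (hc : 0 < c) : (c • M).PosDef := by
  refine Matrix.PosDef.of_dotProduct_mulVec_pos ?_ ?_
  · show (c • M)ᴴ = c • M
    rw [Matrix.conjTranspose_smul, hM.1, star_trivial]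
  · intro x hx
    rw [Matrix.smul_mulVec, dotProduct_smul, smul_eq_mul]
    exact mul_pos hc (hM.dotProduct_mulVec_pos hx)

theorem posDef_convex {m' : Type*} [Fintype m'] {M N : Matrix m' m' ℝ} (hM : M.PosDef)
    (hN : N.PosDef) {a b : ℝ} (ha : 0 ≤ a) (hb : 0 ≤ b) (hab : a + b = 1) :
    (a • M + b • N).PosDef := by
  rcases eq_or_lt_of_le ha with rfl | ha'
  · have hb1 : b = 1 := by linarith
    have : (0 : ℝ) • M + b • N = N := by rw [hb1, zero_smul, one_smul, zero_add]
    rw [this]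
    exact hN
  · refine Matrix.PosDef.of_dotProduct_mulVec_pos ?_ ?_
    · show (a • M + b • N)ᴴ = a • M + b • N
      rw [Matrix.conjTranspose_add, Matrix.conjTranspose_smul, Matrix.conjTranspose_smul,
        hM.1, hN.1, star_trivial, star_trivial]
    · intro x hx
      rw [Matrix.add_mulVec, dotProduct_add, Matrix.smul_mulVec,
        Matrix.smul_mulVec, dotProduct_smul, dotProduct_smul,
        smul_eq_mul, smul_eq_mul]
      exact add_pos_of_pos_of_nonneg (mul_pos ha' (hM.dotProduct_mulVec_pos hx))
        (mul_nonneg hb (hN.dotProduct_mulVec_pos hx).le)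

end OpenCone

end PconeAux







/-- `P_p` is an open convex cone in the space of real symmetric `n × n`
matrices — open in the subspace of symmetric matrices, convex and closed under positive
scalar multiplication — and `A ↦ F(λ(A))` is concave on `P_p`. -/
theorem PconeMat_open_convex_cone_Fpn_concave (n p : ℕ) (hn : 2 ≤ n) (hp1 : 1 ≤ p)
    (hpn : p ≤ n) :
    (∃ U : Set (Matrix (Fin n) (Fin n) ℝ), IsOpen U ∧
      PconeMat n p = U ∩ {A | A.IsHermitian}) ∧
    Convex ℝ (PconeMat n p) ∧
    (∀ t : ℝ, 0 < t → ∀ A ∈ PconeMat n p, t • A ∈ PconeMat n p) ∧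
    (∀ A ∈ PconeMat n p, ∀ B ∈ PconeMat n p, ∀ t : ℝ, 0 ≤ t → t ≤ 1 →
      t * FpnMat n p A + (1 - t) * FpnMat n p B ≤ FpnMat n p (t • A + (1 - t) • B)) := by
  classical
  have hmem : ∀ A : Matrix (Fin n) (Fin n) ℝ,
      A ∈ PconeMat n p ↔ A.IsHermitian ∧ (PconeAux.Dp p A).PosDef := by
    intro A
    constructor
    · rintro ⟨hA, hP⟩
      exact ⟨hA, (PconeAux.posDef_Dp_iff hpn hA).mpr (fun S => hP S.1 S.2)⟩
    · rintro ⟨hA, hP⟩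
      exact ⟨hA, fun S hS => (PconeAux.posDef_Dp_iff hpn hA).mp hP ⟨S, hS⟩⟩
  have hcard : Fintype.card (PconeAux.SIdx n p) = n.choose p := by
    rw [Fintype.card_subtype]
    calc (Finset.univ.filter fun S : Finset (Fin n) => S.card = p).card
        = ((Finset.univ : Finset (Fin n)).powerset.filter fun S => S.card = p).card := by
          rw [Finset.powerset_univ]
      _ = ((Finset.univ : Finset (Fin n)).powersetCard p).card := by
          rw [← Finset.powersetCard_eq_filter]
      _ = n.choose p := by
          rw [Finset.card_powersetCard, Finset.card_univ, Fintype.card_fin]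
  have hchoose : (0:ℕ) < n.choose p := Nat.choose_pos hpn
  have hc0 : 0 < Fintype.card (PconeAux.SIdx n p) := by rw [hcard]; exact hchoose
  have hFeq : ∀ (C : Matrix (Fin n) (Fin n) ℝ) (hC : C.IsHermitian),
      FpnMat n p C = Matrix.det (PconeAux.Dp p C) ^ ((n.choose p : ℝ)⁻¹) := by
    intro C hC
    simp only [FpnMat]
    rw [dif_pos hC]
    congr 1
    rw [PconeAux.det_Dp hpn hC]
    exact Finset.prod_subtype _ (fun S => Finset.mem_powersetCard_univ) _
  refine ⟨⟨{A | ∀ x : PconeAux.SIdx n p → ℝ, x ≠ 0 → 0 < star x ⬝ᵥ (PconeAux.Dp p A) *ᵥ x},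
      PconeAux.isOpen_quad_set hp1 hpn, ?_⟩, ?_, ?_, ?_⟩
  · ext A
    simp only [Set.mem_inter_iff, Set.mem_setOf_eq]
    rw [hmem A]
    constructor
    · rintro ⟨hA, hP⟩
      exact ⟨fun x hx => hP.dotProduct_mulVec_pos hx, hA⟩
    · rintro ⟨hq, hA⟩
      exact ⟨hA, Matrix.PosDef.of_dotProduct_mulVec_pos (PconeAux.Dp_isHermitian hpn hA) (fun x hx => hq x hx)⟩
  · intro A hA B hB a b ha hb hab
    obtain ⟨hAh, hAP⟩ := (hmem A).mp hA
    obtain ⟨hBh, hBP⟩ := (hmem B).mp hB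
    apply (hmem _).mpr
    refine ⟨?_, ?_⟩
    · show (a • A + b • B)ᴴ = a • A + b • B
      rw [Matrix.conjTranspose_add, Matrix.conjTranspose_smul, Matrix.conjTranspose_smul,
        hAh, hBh, star_trivial, star_trivial]
    · rw [PconeAux.Dp_add, PconeAux.Dp_smul, PconeAux.Dp_smul]
      exact PconeAux.posDef_convex hAP hBP ha hb hab
  · intro t ht A hA
    obtain ⟨hAh, hAP⟩ := (hmem A).mp hA
    apply (hmem _).mpr
    refine ⟨?_, ?_⟩
    · show (t • A)ᴴ = t • A
      rw [Matrix.conjTranspose_smul, hAh, star_trivial]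
    · rw [PconeAux.Dp_smul]
      exact PconeAux.posDef_smul_pos hAP ht
  · intro A hA B hB t ht0 ht1
    obtain ⟨hAh, hAP⟩ := (hmem A).mp hA
    obtain ⟨hBh, hBP⟩ := (hmem B).mp hB
    rcases eq_or_lt_of_le ht0 with rfl | ht0'
    · simp
    rcases eq_or_lt_of_le ht1 with rfl | ht1'
    · simp
    have h1t : 0 < 1 - t := by linarith
    have hCh : (t • A + (1 - t) • B).IsHermitian := by
      show (t • A + (1 - t) • B)ᴴ = t • A + (1 - t) • B
      rw [Matrix.conjTranspose_add, Matrix.conjTranspose_smul, Matrix.conjTranspose_smul,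
        hAh, hBh, star_trivial, star_trivial]
    rw [hFeq A hAh, hFeq B hBh, hFeq _ hCh]
    have hDp : PconeAux.Dp p (t • A + (1 - t) • B)
        = t • PconeAux.Dp p A + (1 - t) • PconeAux.Dp p B := by
      rw [PconeAux.Dp_add, PconeAux.Dp_smul, PconeAux.Dp_smul]
    rw [hDp]
    have hX : (t • PconeAux.Dp p A).PosDef := PconeAux.posDef_smul_pos hAP ht0'
    have hY : ((1 - t) • PconeAux.Dp p B).PosDef := PconeAux.posDef_smul_pos hBP h1t
    have hmink := PconeAux.minkowski_det hc0 hX hY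
    rw [hcard] at hmink
    have hNne : (n.choose p : ℝ) ≠ 0 := Nat.cast_ne_zero.mpr hchoose.ne'
    have hsc : ∀ (c : ℝ), 0 < c → ∀ (M : Matrix (PconeAux.SIdx n p) (PconeAux.SIdx n p) ℝ),
        M.PosDef → Matrix.det (c • M) ^ ((n.choose p : ℝ)⁻¹)
          = c * Matrix.det M ^ ((n.choose p : ℝ)⁻¹) := by
      intro c hc M hM
      rw [Matrix.det_smul, hcard,
        Real.mul_rpow (pow_nonneg hc.le _) hM.det_pos.le]
      congr 1
      rw [← Real.rpow_natCast c (n.choose p), ← Real.rpow_mul hc.le,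
        mul_inv_cancel₀ hNne, Real.rpow_one]
    rw [hsc t ht0' _ hAP, hsc (1 - t) h1t _ hBP] at hmink
    exact hmink
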